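/- For every integer k > 1 there exists a constant C such that for all n, every simple graph G on n vertices that admits a proper edge-coloring with no rainbow copy of the matching M_k contains at most C·n^k copies of M_k. (Upper bound of the Proposition on matchings: ex(n, M_k, rainbow-M_k) = O(n^k).) -/

import Mathlib

open SimpleGraph

/-- A proper edge-coloring: distinct edges of `G` sharing a vertex get different colors. -/
def IsProperEdgeColoring {V β : Type*} (G : SimpleGraph V) (c : Sym2 V → β) : Prop :=
  ∀ e₁ ∈ G.edgeSet, ∀ e₂ ∈ G.edgeSet, e₁ ≠ e₂ → (∃ v, v ∈ e₁ ∧ v ∈ e₂) → c e₁ ≠ c e₂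

/-- `G`, with edge-coloring `c`, contains a rainbow copy of `H`:
a subgraph isomorphic to `H` all of whose edges get pairwise distinct colors. -/
def HasRainbowCopy {V W β : Type*} (G : SimpleGraph V) (c : Sym2 V → β)
    (H : SimpleGraph W) : Prop :=
  ∃ A : G.Subgraph, Nonempty (A.coe ≃g H) ∧ Set.InjOn c A.edgeSet

/-- The number of copies of `H` in `G`, i.e. the number of subgraphs of `G`
isomorphic to `H`. -/
noncomputable def copyCount {V W : Type*} (G : SimpleGraph V) (H : SimpleGraph W) : ℕ :=
  Set.ncard {A : G.Subgraph | Nonempty (A.coe ≃g H)}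
/-- The matching M_k with k pairwise disjoint edges, on 2k vertices. -/
def matchingGraph (k : ℕ) : SimpleGraph (Fin (2 * k)) :=
  SimpleGraph.fromRel (fun a b => a.1 / 2 = b.1 / 2)


-- Auxiliary lemmas --

lemma matchingGraph_adj {k : ℕ} {a b : Fin (2 * k)} :
    (matchingGraph k).Adj a b ↔ a ≠ b ∧ a.1 / 2 = b.1 / 2 := by
  constructor
  · rintro ⟨h1, h2 | h2⟩ <;> exact ⟨h1, by omega⟩
  · rintro ⟨h1, h2⟩; exact ⟨h1, Or.inl h2⟩

/-- index of an edge -/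
def edgeIdx {k : ℕ} : Sym2 (Fin (2 * k)) → ℕ :=
  Sym2.lift ⟨fun a b => min (a.1 / 2) (b.1 / 2), fun a b => by simp [min_comm]⟩

lemma edgeIdx_lt {k : ℕ} {e : Sym2 (Fin (2 * k))} (he : e ∈ (matchingGraph k).edgeSet) :
    edgeIdx e < k := by
  induction e with
  | _ a b =>
    rw [SimpleGraph.mem_edgeSet, matchingGraph_adj] at he
    have := a.2
    simp only [edgeIdx, Sym2.lift_mk]
    omega

lemma edgeIdx_injOn {k : ℕ} : Set.InjOn edgeIdx (matchingGraph k).edgeSet := by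
  intro e he f hf hef
  induction e with
  | _ a b =>
    induction f with
    | _ c d =>
      rw [SimpleGraph.mem_edgeSet, matchingGraph_adj] at he hf
      simp only [edgeIdx, Sym2.lift_mk] at hef
      have hab : a ≠ b := he.1
      have hcd : c ≠ d := hf.1
      have hab' : a.1 ≠ b.1 := fun h => hab (Fin.ext h)
      have hcd' : c.1 ≠ d.1 := fun h => hcd (Fin.ext h)
      rw [Sym2.eq_iff]
      have h1 := he.2
      have h2 := hf.2
      have : (a.1 = c.1 ∧ b.1 = d.1) ∨ (a.1 = d.1 ∧ b.1 = c.1) := by omega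
      rcases this with ⟨h3, h4⟩ | ⟨h3, h4⟩
      · exact Or.inl ⟨Fin.ext h3, Fin.ext h4⟩
      · exact Or.inr ⟨Fin.ext h3, Fin.ext h4⟩

lemma matching_edgeSet_ncard {k : ℕ} : ((matchingGraph k).edgeSet).ncard ≤ k := by
  classical
  have h1 : ((matchingGraph k).edgeSet).ncard = (edgeIdx '' (matchingGraph k).edgeSet).ncard :=
    (Set.ncard_image_of_injOn edgeIdx_injOn).symm
  rw [h1]
  have h2 : edgeIdx '' (matchingGraph k).edgeSet ⊆ ↑(Finset.range k) := by
    rintro x ⟨e, he, rfl⟩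
    simp [edgeIdx_lt he]
  calc (edgeIdx '' (matchingGraph k).edgeSet).ncard ≤ (↑(Finset.range k) : Set ℕ).ncard :=
        Set.ncard_le_ncard h2 (Finset.range k).finite_toSet
    _ = k := by rw [Set.ncard_coe_finset, Finset.card_range]

section Copy
variable {n k : ℕ} {G : SimpleGraph (Fin n)}

/-- every vertex of the matching graph has a partner -/
lemma matching_partner (hk : 0 < k) (a : Fin (2 * k)) : ∃ b, (matchingGraph k).Adj a b := by
  by_cases h2 : a.1 % 2 = 0
  · refine ⟨⟨a.1 + 1, by omega⟩, ?_⟩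
    rw [matchingGraph_adj]
    refine ⟨Fin.ne_of_val_ne ?_, ?_⟩ <;> simp only [Fin.val_mk] <;> omega
  · refine ⟨⟨a.1 - 1, by omega⟩, ?_⟩
    rw [matchingGraph_adj]
    refine ⟨Fin.ne_of_val_ne ?_, ?_⟩ <;> simp only [Fin.val_mk] <;> omega

lemma copy_verts_eq_support (hk : 0 < k) {A : G.Subgraph}
    (h : Nonempty (A.coe ≃g matchingGraph k)) : A.verts = A.support := by
  obtain ⟨φ⟩ := h
  apply Set.Subset.antisymm
  · intro v hv
    obtain ⟨b, hb⟩ := matching_partner hk (φ ⟨v, hv⟩)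
    have : A.coe.Adj ⟨v, hv⟩ (φ.symm b) := by
      rw [← φ.map_rel_iff]
      simpa using hb
    exact ⟨(φ.symm b : Fin n), this⟩
  · exact A.support_subset_verts

lemma copy_eq_of_edgeSet_eq (hk : 0 < k) {A B : G.Subgraph}
    (hA : Nonempty (A.coe ≃g matchingGraph k)) (hB : Nonempty (B.coe ≃g matchingGraph k))
    (h : A.edgeSet = B.edgeSet) : A = B := by
  have hadj : A.Adj = B.Adj := by
    ext a b
    rw [← SimpleGraph.Subgraph.mem_edgeSet, ← SimpleGraph.Subgraph.mem_edgeSet, h]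
  ext a b
  · rw [copy_verts_eq_support hk hA, copy_verts_eq_support hk hB]
    unfold SimpleGraph.Subgraph.support SetRel.dom
    rw [hadj]
  · rw [hadj]

lemma copy_edgeSet_ncard (hk : 0 < k) {A : G.Subgraph}
    (h : Nonempty (A.coe ≃g matchingGraph k)) : A.edgeSet.ncard ≤ k := by
  obtain ⟨φ⟩ := h
  have h1 : A.edgeSet = Sym2.map (↑) '' A.coe.edgeSet := (A.image_coe_edgeSet_coe).symm
  have h2 : A.edgeSet.ncard = A.coe.edgeSet.ncard := by
    rw [h1]
    exact Set.ncard_image_of_injective _ (Sym2.map.injective Subtype.val_injective)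
  have h3 : A.coe.edgeSet.ncard = (matchingGraph k).edgeSet.ncard := by
    rw [← Nat.card_coe_set_eq, ← Nat.card_coe_set_eq]
    exact Nat.card_congr φ.mapEdgeSet
  rw [h2, h3]
  exact matching_edgeSet_ncard

end Copy


/-- The subgraph spanned by a set of edges. -/
def edgesSubgraph {V : Type*} (G : SimpleGraph V) (R : Set (Sym2 V))
    (hsub : R ⊆ G.edgeSet) : G.Subgraph where
  verts := {x | ∃ e ∈ R, x ∈ e}
  Adj := fun x y => s(x, y) ∈ R
  adj_sub := fun h => (SimpleGraph.mem_edgeSet G).mp (hsub h)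
  edge_vert := fun h => ⟨_, h, Sym2.mem_mk_left _ _⟩
  symm := ⟨fun x y h => by show s(y, x) ∈ R; rwa [Sym2.eq_swap]⟩

lemma edgesSubgraph_edgeSet {V : Type*} (G : SimpleGraph V) (R : Set (Sym2 V))
    (hsub : R ⊆ G.edgeSet) : (edgesSubgraph G R hsub).edgeSet = R := by
  ext e
  induction e with
  | _ a b => exact Iff.rfl

lemma rainbow_copy_of_matching {n k : ℕ} (hk : 0 < k) {G : SimpleGraph (Fin n)} {β : Type*}
    (col : Sym2 (Fin n) → β) (R : Finset (Sym2 (Fin n)))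
    (hcard : R.card = k) (hsub : ↑R ⊆ G.edgeSet)
    (hdisj : ∀ e ∈ R, ∀ f ∈ R, e ≠ f → ∀ x : Fin n, x ∈ e → x ∉ f)
    (hinj : Set.InjOn col ↑R) : HasRainbowCopy G col (matchingGraph k) := by
  classical
  set A : G.Subgraph := edgesSubgraph G ↑R hsub with hA
  have hedge : A.edgeSet = ↑R := edgesSubgraph_edgeSet G ↑R hsub
  refine ⟨A, ⟨?_⟩, by rw [hedge]; exact hinj⟩
  -- the isomorphism
  have hmk : ∀ e : Sym2 (Fin n), s(e.out.1, e.out.2) = e := fun e => by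
    rw [Sym2.mk, e.out_eq]
  have hdisj' : ∀ e ∈ R, ∀ f ∈ R, ∀ x : Fin n, x ∈ e → x ∈ f → e = f := by
    intro e he f hf x hxe hxf
    by_contra hne
    exact hdisj e he f hf hne x hxe hxf
  have hne : ∀ e ∈ R, e.out.1 ≠ e.out.2 := by
    intro e he h
    exact G.not_isDiag_of_mem_edgeSet (hsub he) (by rw [← hmk e]; exact Sym2.mk_isDiag_iff.mpr h)
  let g : Fin k ≃ ↥R := (Finset.equivFinOfCardEq hcard).symm
  let idx : Fin (2 * k) → Fin k := fun i => ⟨i.1 / 2, by have := i.2; omega⟩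
  let f0 : Fin (2 * k) → Fin n := fun i =>
    if i.1 % 2 = 0 then (g (idx i) : Sym2 (Fin n)).out.1 else (g (idx i) : Sym2 (Fin n)).out.2
  have hfmem : ∀ i, f0 i ∈ (g (idx i) : Sym2 (Fin n)) := by
    intro i
    dsimp only [f0]
    split
    · exact Sym2.out_fst_mem _
    · exact Sym2.out_snd_mem _
  have hgR : ∀ m : Fin k, (g m : Sym2 (Fin n)) ∈ R := fun m => (g m).2
  let f : Fin (2 * k) → A.verts := fun i => ⟨f0 i, ⟨_, hgR (idx i), hfmem i⟩⟩
  have hidx_inj : ∀ i j, (g (idx i) : Sym2 (Fin n)) = (g (idx j) : Sym2 (Fin n)) →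
      i.1 / 2 = j.1 / 2 := by
    intro i j h
    have : idx i = idx j := g.injective (Subtype.ext h)
    simpa [idx, Fin.ext_iff] using this
  have hInj : Function.Injective f := by
    intro i j hij
    have h0 : f0 i = f0 j := congrArg Subtype.val hij
    have heq : (g (idx i) : Sym2 (Fin n)) = (g (idx j) : Sym2 (Fin n)) := by
      apply hdisj' _ (hgR (idx i)) _ (hgR (idx j)) (f0 i) (hfmem i)
      rw [h0]; exact hfmem j
    have hdiv : i.1 / 2 = j.1 / 2 := hidx_inj i j heq
    by_cases hi : i.1 % 2 = 0 <;> by_cases hj : j.1 % 2 = 0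
    · exact Fin.ext (by omega)
    · exfalso
      apply hne _ (hgR (idx i))
      have h1 : f0 i = (g (idx i) : Sym2 (Fin n)).out.1 := by simp [f0, hi]
      have h2 : f0 j = (g (idx j) : Sym2 (Fin n)).out.2 := by simp [f0, hj]
      have h3 := h1.symm.trans (h0.trans h2)
      rw [← heq] at h3
      exact h3
    · exfalso
      apply hne _ (hgR (idx i))
      have h1 : f0 i = (g (idx i) : Sym2 (Fin n)).out.2 := by simp [f0, hi]
      have h2 : f0 j = (g (idx j) : Sym2 (Fin n)).out.1 := by simp [f0, hj]
      have h3 := h2.symm.trans (h0.symm.trans h1)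
      rw [← heq] at h3
      exact h3
    · exact Fin.ext (by omega)
  have hSurj : Function.Surjective f := by
    rintro ⟨x, e, he, hx⟩
    set m : Fin k := g.symm ⟨e, he⟩ with hm
    have hgm : (g m : Sym2 (Fin n)) = e := by rw [hm, g.apply_symm_apply]
    rw [← hmk e, Sym2.mem_iff] at hx
    rcases hx with hx | hx
    · refine ⟨⟨2 * m.1, by omega⟩, ?_⟩
      apply Subtype.ext
      show f0 _ = x
      have hidx : idx ⟨2 * m.1, by omega⟩ = m := Fin.ext (by show 2 * m.1 / 2 = m.1; omega)
      simp only [f0, hidx]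
      rw [if_pos (show (⟨2 * m.1, by omega⟩ : Fin (2 * k)).1 % 2 = 0 by show 2 * m.1 % 2 = 0; omega), hgm, hx]
    · refine ⟨⟨2 * m.1 + 1, by omega⟩, ?_⟩
      apply Subtype.ext
      show f0 _ = x
      have hidx : idx ⟨2 * m.1 + 1, by omega⟩ = m := Fin.ext (by show (2 * m.1 + 1) / 2 = m.1; omega)
      simp only [f0, hidx]
      rw [if_neg (show ¬ (⟨2 * m.1 + 1, by omega⟩ : Fin (2 * k)).1 % 2 = 0 by show ¬ (2 * m.1 + 1) % 2 = 0; omega), hgm, hx]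
  have hAdjIff : ∀ i j, A.coe.Adj (f i) (f j) ↔ (matchingGraph k).Adj i j := by
    intro i j
    have hcoe : A.coe.Adj (f i) (f j) ↔ s(f0 i, f0 j) ∈ R := by
      rw [SimpleGraph.Subgraph.coe_adj]
      exact Iff.rfl
    rw [hcoe, matchingGraph_adj]
    constructor
    · intro h
      have hij : i ≠ j := by
        rintro rfl
        exact G.not_isDiag_of_mem_edgeSet (hsub h) (Sym2.mk_isDiag_iff.mpr rfl)
      refine ⟨hij, ?_⟩
      have h1 : (g (idx i) : Sym2 (Fin n)) = s(f0 i, f0 j) :=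
        hdisj' _ (hgR (idx i)) _ h (f0 i) (hfmem i) (Sym2.mem_mk_left _ _)
      have h2 : (g (idx j) : Sym2 (Fin n)) = s(f0 i, f0 j) :=
        hdisj' _ (hgR (idx j)) _ h (f0 j) (hfmem j) (Sym2.mem_mk_right _ _)
      exact hidx_inj i j (h1.trans h2.symm)
    · rintro ⟨hij, hdiv⟩
      have hidx : idx i = idx j := Fin.ext (show i.1 / 2 = j.1 / 2 from hdiv)
      have hpar : i.1 % 2 ≠ j.1 % 2 := by
        intro h
        exact hij (Fin.ext (by omega))
      by_cases hi : i.1 % 2 = 0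
      · have hj : ¬ (j.1 % 2 = 0) := by omega
        have : s(f0 i, f0 j) = (g (idx i) : Sym2 (Fin n)) := by
          simp only [f0, hidx, if_pos hi, if_neg hj]
          exact hmk _
        rw [this]; exact hgR _
      · have hj : j.1 % 2 = 0 := by omega
        have : s(f0 i, f0 j) = (g (idx i) : Sym2 (Fin n)) := by
          simp only [f0, hidx, if_neg hi, if_pos hj]
          rw [Sym2.eq_swap]
          exact hmk _
        rw [this]; exact hgR _
  exact (RelIso.mk (Equiv.ofBijective f ⟨hInj, hSurj⟩) (fun {i j} => hAdjIff i j) :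
    matchingGraph k ≃g A.coe).symm


lemma ncard_biUnion_le {α ι : Type*} (s : Finset ι) (f : ι → Set α)
    (hfin : ∀ i, (f i).Finite) :
    (⋃ i ∈ s, f i).ncard ≤ ∑ i ∈ s, (f i).ncard := by
  classical
  induction s using Finset.induction with
  | empty => simp
  | insert _ _ hx ih =>
    rename_i a s
    rw [Finset.sum_insert hx]
    refine le_trans (le_of_eq (by rw [Finset.set_biUnion_insert])) ?_
    exact le_trans (Set.ncard_union_le _ _) (by omega)

lemma incident_ncard_le {n : ℕ} (a : Fin n) :
    ({e : Sym2 (Fin n) | a ∈ e}).ncard ≤ n := by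
  classical
  have hinj : Set.InjOn (fun e : Sym2 (Fin n) => if h : a ∈ e then Sym2.Mem.other h else a)
      {e : Sym2 (Fin n) | a ∈ e} := by
    intro e he f hf hef
    simp only [Set.mem_setOf_eq] at he hf
    have hef' : (if h : a ∈ e then Sym2.Mem.other h else a)
        = (if h : a ∈ f then Sym2.Mem.other h else a) := hef
    rw [dif_pos he, dif_pos hf] at hef'
    rw [← Sym2.other_spec he, ← Sym2.other_spec hf, hef']
  calc ({e : Sym2 (Fin n) | a ∈ e}).ncard
      = ((fun e : Sym2 (Fin n) => if h : a ∈ e then Sym2.Mem.other h else a) ''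
        {e : Sym2 (Fin n) | a ∈ e}).ncard := (Set.ncard_image_of_injOn hinj).symm
    _ ≤ (Set.univ : Set (Fin n)).ncard := Set.ncard_le_ncard (Set.subset_univ _) (Set.toFinite _)
    _ = n := by rw [Set.ncard_univ]; simp


lemma colorClass_ncard_le {n : ℕ} {G : SimpleGraph (Fin n)} {β : Type*}
    {col : Sym2 (Fin n) → β} (hp : IsProperEdgeColoring G col) (c : β) :
    ({e : Sym2 (Fin n) | e ∈ G.edgeSet ∧ col e = c}).ncard ≤ n := by
  classical
  have hinj : Set.InjOn (fun e : Sym2 (Fin n) => e.out.1)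
      {e : Sym2 (Fin n) | e ∈ G.edgeSet ∧ col e = c} := by
    rintro e ⟨he, hce⟩ f ⟨hf, hcf⟩ hef
    have hef' : e.out.1 = f.out.1 := hef
    by_contra hne
    exact hp e he f hf hne ⟨e.out.1, Sym2.out_fst_mem e, hef' ▸ Sym2.out_fst_mem f⟩
      (hce.trans hcf.symm)
  calc ({e : Sym2 (Fin n) | e ∈ G.edgeSet ∧ col e = c}).ncard
      = ((fun e : Sym2 (Fin n) => e.out.1) ''
        {e : Sym2 (Fin n) | e ∈ G.edgeSet ∧ col e = c}).ncard :=
        (Set.ncard_image_of_injOn hinj).symm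
    _ ≤ (Set.univ : Set (Fin n)).ncard := Set.ncard_le_ncard (Set.subset_univ _) (Set.toFinite _)
    _ = n := by rw [Set.ncard_univ]; simp

lemma edge_bound {n k : ℕ} (hk : 0 < k) {G : SimpleGraph (Fin n)} {β : Type*}
    {col : Sym2 (Fin n) → β} (hp : IsProperEdgeColoring G col)
    (hno : ¬ HasRainbowCopy G col (matchingGraph k)) :
    G.edgeSet.ncard ≤ 3 * k * n := by
  classical
  set 𝓡 : Set (Finset (Sym2 (Fin n))) :=
    {S | ↑S ⊆ G.edgeSet ∧ (∀ e ∈ S, ∀ f ∈ S, e ≠ f → ∀ x : Fin n, x ∈ e → x ∉ f) ∧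
      Set.InjOn col ↑S} with h𝓡
  have hempty : (∅ : Finset (Sym2 (Fin n))) ∈ 𝓡 := by
    refine ⟨by simp, by simp, by simp⟩
  obtain ⟨S, hS, hmax⟩ : ∃ S ∈ 𝓡, ∀ S' ∈ 𝓡, S.card ≤ S'.card → S.card = S'.card := by
    obtain ⟨S, hS, h⟩ := Set.exists_max_image 𝓡 Finset.card (Set.toFinite 𝓡) ⟨∅, hempty⟩
    exact ⟨S, hS, fun S' h' hle => le_antisymm hle (h S' h')⟩
  -- S has fewer than k edges
  have hcard : S.card < k := by
    by_contra h
    push_neg at h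
    obtain ⟨T, hTS, hTcard⟩ := Finset.exists_subset_card_eq h
    apply hno
    refine rainbow_copy_of_matching hk col T hTcard
      (le_trans (Finset.coe_subset.mpr hTS) hS.1) ?_ (hS.2.2.mono (Finset.coe_subset.mpr hTS))
    intro e he f hf
    exact hS.2.1 e (hTS he) f (hTS hf)
  -- every edge is incident to S or shares a color with S
  have hcover : ∀ e ∈ G.edgeSet,
      (∃ f ∈ S, ∃ x : Fin n, x ∈ e ∧ x ∈ f) ∨ (∃ f ∈ S, col e = col f) := by
    intro e he
    by_contra hcon
    push_neg at hcon
    obtain ⟨h1, h2⟩ := hcon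
    have heS : e ∉ S := by
      intro h
      exact h1 e h e.out.1 (Sym2.out_fst_mem e) (Sym2.out_fst_mem e)
    have hmem : insert e S ∈ 𝓡 := by
      refine ⟨?_, ?_, ?_⟩
      · rw [Finset.coe_insert]
        exact Set.insert_subset he hS.1
      · intro a ha b hb hab x hxa hxb
        rcases Finset.mem_insert.mp ha with ha' | ha' <;>
          rcases Finset.mem_insert.mp hb with hb' | hb'
        · exact hab (ha'.trans hb'.symm)
        · exact h1 b hb' x (ha' ▸ hxa) hxb
        · exact h1 a ha' x (hb' ▸ hxb) hxa
        · exact hS.2.1 a ha' b hb' hab x hxa hxb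
      · rw [Finset.coe_insert]
        intro a ha b hb hab
        rcases Set.mem_insert_iff.mp ha with ha' | ha' <;>
          rcases Set.mem_insert_iff.mp hb with hb' | hb'
        · rw [ha', hb']
        · exact absurd (ha' ▸ hab) (h2 b hb')
        · exact absurd (hb' ▸ hab.symm) (h2 a ha')
        · exact hS.2.2 ha' hb' hab
    have := hmax _ hmem (Finset.card_le_card (Finset.subset_insert e S))
    rw [Finset.card_insert_of_notMem heS] at this
    omega
  -- the covering sets
  set B : Sym2 (Fin n) → Set (Sym2 (Fin n)) := fun f =>
    {e | f.out.1 ∈ e} ∪ {e | f.out.2 ∈ e} ∪ {e | e ∈ G.edgeSet ∧ col e = col f} with hB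
  have hsub : G.edgeSet ⊆ ⋃ f ∈ S, B f := by
    intro e he
    rcases hcover e he with ⟨f, hf, x, hxe, hxf⟩ | ⟨f, hf, hc⟩
    · refine Set.mem_biUnion hf ?_
      have : x = f.out.1 ∨ x = f.out.2 := by
        have := (Prod.mk.eta (p := f.out)) ▸ f.out_eq
        rw [← Sym2.mem_iff (b := f.out.1) (c := f.out.2)]
        rwa [show s(f.out.1, f.out.2) = f from this]
      rcases this with rfl | rfl
      · exact Or.inl (Or.inl hxe)
      · exact Or.inl (Or.inr hxe)
    · exact Set.mem_biUnion hf (Or.inr ⟨he, hc⟩)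
  have hBcard : ∀ f, (B f).ncard ≤ 3 * n := by
    intro f
    refine le_trans (Set.ncard_union_le _ _) ?_
    have h1 := Set.ncard_union_le {e : Sym2 (Fin n) | f.out.1 ∈ e} {e | f.out.2 ∈ e}
    have h2 := incident_ncard_le f.out.1
    have h3 := incident_ncard_le f.out.2
    have h4 := colorClass_ncard_le hp (col f)
    omega
  calc G.edgeSet.ncard ≤ (⋃ f ∈ S, B f).ncard := Set.ncard_le_ncard hsub (Set.toFinite _)
    _ ≤ ∑ f ∈ S, (B f).ncard := ncard_biUnion_le S B (fun f => Set.toFinite _)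
    _ ≤ ∑ f ∈ S, 3 * n := Finset.sum_le_sum (fun f _ => hBcard f)
    _ = S.card * (3 * n) := by rw [Finset.sum_const, smul_eq_mul]
    _ ≤ 3 * k * n := by
        have : S.card ≤ k := le_of_lt hcard
        nlinarith


/-- Upper bound of the proposition on matchings: ex(n, M_k, rainbow-M_k) = O(n^k). -/
theorem matching_rainbow_upper (k : ℕ) (hk : 1 < k) :
    ∃ C : ℝ, ∀ (n : ℕ) (G : SimpleGraph (Fin n)) (β : Type*) (col : Sym2 (Fin n) → β),
      IsProperEdgeColoring G col → ¬ HasRainbowCopy G col (matchingGraph k) →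
      (_root_.copyCount G (matchingGraph k) : ℝ) ≤ C * (n : ℝ) ^ k := by
  classical
  have hk0 : 0 < k := by omega
  refine ⟨((k + 1) * (3 * k + 1) ^ k : ℕ), ?_⟩
  intro n G β col hp hno
  set Copies : Set G.Subgraph := {A : G.Subgraph | Nonempty (A.coe ≃g matchingGraph k)}
    with hCopies
  rcases Nat.eq_zero_or_pos n with rfl | hn
  · -- no vertices: no copies
    have : Copies = ∅ := by
      ext A
      simp only [hCopies, Set.mem_setOf_eq, Set.mem_empty_iff_false, iff_false]
      rintro ⟨φ⟩
      exact (φ.symm ⟨0, by omega⟩ : A.verts).1.elim0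
    rw [_root_.copyCount, ← hCopies, this]
    simp only [Set.ncard_empty, Nat.cast_zero]
    positivity
  -- n ≥ 1
  have hm : G.edgeSet.ncard ≤ 3 * k * n := edge_bound hk0 hp hno
  set E : Finset (Sym2 (Fin n)) := (Set.toFinite G.edgeSet).toFinset with hE
  have hEcard : E.card = G.edgeSet.ncard := (Set.ncard_eq_toFinset_card _ _).symm
  set ψ : G.Subgraph → Finset (Sym2 (Fin n)) := fun A => (Set.toFinite A.edgeSet).toFinset
    with hψ
  have hinj : Set.InjOn ψ Copies := by
    intro A hA B hB hAB
    refine copy_eq_of_edgeSet_eq hk0 hA hB ?_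
    have := congrArg (fun s : Finset (Sym2 (Fin n)) => (s : Set (Sym2 (Fin n)))) hAB
    simpa only [hψ, Set.Finite.coe_toFinset] using this
  set 𝒮 : Finset (Finset (Sym2 (Fin n))) := E.powerset.filter (fun s => s.card ≤ k) with h𝒮
  have himage : ψ '' Copies ⊆ ↑𝒮 := by
    rintro s ⟨A, hA, rfl⟩
    simp only [h𝒮, Finset.coe_filter, Set.mem_setOf_eq, Finset.mem_powerset]
    constructor
    · rw [← Finset.coe_subset, hψ]
      simp only [Set.Finite.coe_toFinset, hE]
      exact A.edgeSet_subset
    · rw [hψ]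
      simp only [← Set.ncard_eq_toFinset_card]
      exact copy_edgeSet_ncard hk0 hA
  have hcount : _root_.copyCount G (matchingGraph k) ≤ 𝒮.card := by
    rw [_root_.copyCount, ← hCopies, ← Set.ncard_image_of_injOn hinj]
    calc (ψ '' Copies).ncard ≤ (↑𝒮 : Set (Finset (Sym2 (Fin n)))).ncard :=
          Set.ncard_le_ncard himage (Set.toFinite _)
      _ = 𝒮.card := Set.ncard_coe_finset _
  -- bound 𝒮.card
  have h𝒮sub : 𝒮 ⊆ (Finset.range (k + 1)).biUnion
      (fun j => Finset.powersetCard j E) := by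
    intro s hs
    simp only [h𝒮, Finset.mem_filter, Finset.mem_powerset] at hs
    rw [Finset.mem_biUnion]
    exact ⟨s.card, Finset.mem_range.mpr (by omega), Finset.mem_powersetCard.mpr ⟨hs.1, rfl⟩⟩
  have h𝒮card : 𝒮.card ≤ (k + 1) * (E.card + 1) ^ k := by
    calc 𝒮.card ≤ ((Finset.range (k + 1)).biUnion (fun j => Finset.powersetCard j E)).card :=
          Finset.card_le_card h𝒮sub
      _ ≤ ∑ j ∈ Finset.range (k + 1), (Finset.powersetCard j E).card :=
          Finset.card_biUnion_le
      _ ≤ ∑ j ∈ Finset.range (k + 1), (E.card + 1) ^ k := by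
          refine Finset.sum_le_sum fun j hj => ?_
          rw [Finset.card_powersetCard]
          calc E.card.choose j ≤ E.card ^ j := Nat.choose_le_pow _ _
            _ ≤ (E.card + 1) ^ j := Nat.pow_le_pow_left (by omega) _
            _ ≤ (E.card + 1) ^ k := Nat.pow_le_pow_right (by omega)
              (by have := Finset.mem_range.mp hj; omega)
      _ = (k + 1) * (E.card + 1) ^ k := by rw [Finset.sum_const, Finset.card_range, smul_eq_mul]
  have hfinal : _root_.copyCount G (matchingGraph k) ≤ (k + 1) * ((3 * k + 1) ^ k * n ^ k) := by
    have h1 : E.card + 1 ≤ (3 * k + 1) * n := by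
      rw [hEcard]
      nlinarith
    calc _root_.copyCount G (matchingGraph k) ≤ (k + 1) * (E.card + 1) ^ k :=
          le_trans hcount h𝒮card
      _ ≤ (k + 1) * ((3 * k + 1) * n) ^ k :=
          Nat.mul_le_mul_left _ (Nat.pow_le_pow_left h1 _)
      _ = (k + 1) * ((3 * k + 1) ^ k * n ^ k) := by rw [mul_pow]
  have := Nat.cast_le (α := ℝ) |>.mpr hfinal
  calc (_root_.copyCount G (matchingGraph k) : ℝ) ≤ ((k + 1) * ((3 * k + 1) ^ k * n ^ k) : ℕ) := this
    _ = ((k + 1) * (3 * k + 1) ^ k : ℕ) * (n : ℝ) ^ k := by push_cast; ring
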